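/- Continuity of the Weierstrass section: let ν ∈ ℤ^ℕ, K ⊂ ℂ∖ℕ compact, ε > 0. Then there exists k₀ ∈ ℕ such that for every μ ∈ ℤ^ℕ with μ(k) = ν(k) for all k < k₀, the functions f_μ and f_ν (defined by f_λ(z) = ∏_{k=1}^∞ E_{m_k^λ}(z/k)^{λ(k)} with m_k^λ = k + ⌈max(0, log|λ(k)|)⌉) satisfy sup_{z∈K} |f_μ(z) − f_ν(z)| < ε. -/

import Mathlib

/-- The Weierstrass factor `E_m(z) = (1 - z) * exp(∑_{j=1}^m z^j / j)`. -/
noncomputable def weierstrassFactor (m : ℕ) (z : ℂ) : ℂ :=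
  (1 - z) * Complex.exp (∑ j ∈ Finset.Icc 1 m, z ^ j / j)

/-- `m_k^ν = k + ⌈max(0, log |ν(k)|)⌉`. -/
noncomputable def mExp (ν : ℕ → ℤ) (k : ℕ) : ℕ :=
  k + ⌈max 0 (Real.log |(ν k : ℝ)|)⌉₊

/-- `f_ν(z) = ∏_{k=1}^∞ E_{m_k^ν}(z/k)^{ν(k)}`. -/
noncomputable def weierstrassProduct (ν : ℕ → ℤ) (z : ℂ) : ℂ :=
  ∏' k : ℕ, weierstrassFactor (mExp ν (k + 1)) (z / (k + 1)) ^ (ν (k + 1))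

namespace WPaux

open Finset

/-- The "principal logarithm" of the Weierstrass factor. -/
noncomputable def logTerm (m : ℕ) (w : ℂ) : ℂ :=
  Complex.log (1 - w) + ∑ j ∈ Finset.Icc 1 m, w ^ j / j

lemma factor_eq_exp (m : ℕ) (w : ℂ) (hw : (1 : ℂ) - w ≠ 0) :
    weierstrassFactor m w = Complex.exp (logTerm m w) := by
  rw [logTerm, Complex.exp_add, Complex.exp_log hw, weierstrassFactor]

set_option maxHeartbeats 1000000 in
lemma logTerm_norm_le (m : ℕ) (w : ℂ) (hw : ‖w‖ ≤ 1 / 2) :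
    ‖logTerm m w‖ ≤ 2 * ‖w‖ ^ (m + 1) := by
  have hw1 : ‖w‖ < 1 := lt_of_le_of_lt hw (by norm_num)
  have hS : HasSum (fun n : ℕ => w ^ n / n) (-Complex.log (1 - w)) :=
    Complex.hasSum_taylorSeries_neg_log hw1
  have hsumm := hS.summable
  have hsplit := Summable.sum_add_tsum_nat_add' (f := fun n : ℕ => w ^ n / n)
    (k := m + 1) ((summable_nat_add_iff (m + 1)).2 hsumm)
  rw [hS.tsum_eq] at hsplit
  have h0 : ∑ j ∈ Finset.range (m + 1), w ^ j / (j : ℂ)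
      = ∑ j ∈ Finset.Icc 1 m, w ^ j / j := by
    rw [Finset.range_eq_Ico, Finset.sum_eq_sum_Ico_succ_bot (Nat.succ_pos m),
      Nat.succ_eq_add_one, Finset.Ico_add_one_right_eq_Icc]
    simp
  have hlog : logTerm m w = -∑' i : ℕ, w ^ (i + (m + 1)) / (i + (m + 1) : ℕ) := by
    rw [logTerm, ← h0]
    linear_combination hsplit
  rw [hlog, norm_neg]
  have hb : ∀ i : ℕ, ‖w ^ (i + (m + 1)) / ((i + (m + 1) : ℕ) : ℂ)‖
      ≤ ‖w‖ ^ (i + (m + 1)) := by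
    intro i
    rw [norm_div, norm_pow]
    have h1 : (1 : ℝ) ≤ ‖((i + (m + 1) : ℕ) : ℂ)‖ := by
      rw [Complex.norm_natCast]
      exact_mod_cast Nat.one_le_iff_ne_zero.2 (by omega)
    calc ‖w‖ ^ (i + (m + 1)) / ‖((i + (m + 1) : ℕ) : ℂ)‖
        ≤ ‖w‖ ^ (i + (m + 1)) / 1 := by
          apply div_le_div_of_nonneg_left (by positivity) (by norm_num) h1
      _ = ‖w‖ ^ (i + (m + 1)) := by ring
  have hgs : Summable (fun i : ℕ => ‖w‖ ^ (i + (m + 1))) := by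
    simp_rw [pow_add]
    exact (summable_geometric_of_lt_one (norm_nonneg w) hw1).mul_right _
  calc ‖∑' i : ℕ, w ^ (i + (m + 1)) / ((i + (m + 1) : ℕ) : ℂ)‖
      ≤ ∑' i : ℕ, ‖w ^ (i + (m + 1)) / ((i + (m + 1) : ℕ) : ℂ)‖ :=
        norm_tsum_le_tsum_norm (hgs.of_nonneg_of_le (fun _ => norm_nonneg _) hb)
    _ ≤ ∑' i : ℕ, ‖w‖ ^ (i + (m + 1)) :=
        Summable.tsum_le_tsum hb (hgs.of_nonneg_of_le (fun _ => norm_nonneg _) hb) hgs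
    _ = (1 - ‖w‖)⁻¹ * ‖w‖ ^ (m + 1) := by
        simp_rw [pow_add]
        rw [tsum_mul_right, tsum_geometric_of_lt_one (norm_nonneg w) hw1]
    _ ≤ 2 * ‖w‖ ^ (m + 1) := by
        apply mul_le_mul_of_nonneg_right _ (by positivity)
        rw [inv_le_comm₀ (by linarith) (by norm_num)]
        linarith


/-- The `k`-th factor of the Weierstrass product. -/
noncomputable def wFac (lam : ℕ → ℤ) (k : ℕ) (z : ℂ) : ℂ :=
  weierstrassFactor (mExp lam (k + 1)) (z / (k + 1)) ^ (lam (k + 1))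

/-- The logarithm of the `k`-th factor. -/
noncomputable def gTerm (lam : ℕ → ℤ) (k : ℕ) (z : ℂ) : ℂ :=
  (lam (k + 1) : ℂ) * logTerm (mExp lam (k + 1)) (z / (k + 1))

lemma weierstrassProduct_eq (lam : ℕ → ℤ) (z : ℂ) :
    weierstrassProduct lam z = ∏' k : ℕ, wFac lam k z := rfl

lemma wFac_eq_exp (lam : ℕ → ℤ) (k : ℕ) (z : ℂ) (h : (1 : ℂ) - z / (k + 1) ≠ 0) :
    wFac lam k z = Complex.exp (gTerm lam k z) := by
  rw [wFac, factor_eq_exp _ _ h, gTerm, Complex.exp_int_mul]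

lemma one_sub_ne (z : ℂ) (hz : ∀ k : ℕ, 1 ≤ k → z ≠ (k : ℂ)) (k : ℕ) :
    (1 : ℂ) - z / (k + 1) ≠ 0 := by
  have hk : ((k : ℂ) + 1) ≠ 0 := Nat.cast_add_one_ne_zero k
  intro h
  rw [sub_eq_zero] at h
  have hzk : z = (k : ℂ) + 1 := by
    have := (div_eq_iff hk).1 h.symm
    linear_combination this
  exact hz (k + 1) (by omega) (by push_cast; exact hzk)

lemma gTerm_norm_le (lam : ℕ → ℤ) (C : ℝ) (z : ℂ) (hz : ‖z‖ ≤ C) (k : ℕ)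
    (hk : 3 * (C + 1) ≤ (k : ℝ) + 1) :
    ‖gTerm lam k z‖ ≤ (1 / 2 : ℝ) ^ (k + 1) := by
  rcases eq_or_ne (lam (k + 1)) 0 with h | h
  · rw [gTerm, h]
    simp only [Int.cast_zero, zero_mul, norm_zero]
    positivity
  have hC0 : (0 : ℝ) ≤ C := le_trans (norm_nonneg z) hz
  have hk1 : (0 : ℝ) < (k : ℝ) + 1 := by positivity
  have hknorm : ‖((k : ℂ) + 1)‖ = (k : ℝ) + 1 := by
    rw [show ((k : ℂ) + 1) = ((k + 1 : ℕ) : ℂ) by push_cast; ring, Complex.norm_natCast]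
    push_cast; ring
  have hw : ‖z / ((k : ℂ) + 1)‖ ≤ C / ((k : ℝ) + 1) := by
    rw [norm_div, hknorm]
    gcongr
  have hw3 : ‖z / ((k : ℂ) + 1)‖ ≤ 1 / 3 := by
    refine hw.trans ?_
    rw [div_le_div_iff₀ hk1 (by norm_num)]
    linarith
  set m := mExp lam (k + 1) with hm
  set r := ⌈max 0 (Real.log |((lam (k + 1) : ℤ) : ℝ)|)⌉₊ with hr
  have hmr : m = (k + 1) + r := rfl
  have hlam1 : (1 : ℝ) ≤ |((lam (k + 1) : ℤ) : ℝ)| := by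
    rw [← Int.cast_abs]
    exact_mod_cast Int.one_le_abs (by omega)
  have hlamr : |((lam (k + 1) : ℤ) : ℝ)| ≤ Real.exp r := by
    rw [← Real.exp_log (by linarith : (0:ℝ) < |((lam (k + 1) : ℤ) : ℝ)|)]
    apply Real.exp_le_exp.2
    exact le_trans (le_max_right 0 _) (Nat.le_ceil _)
  have hexp3 : Real.exp 1 ≤ 3 := by
    have := Real.exp_one_lt_d9
    linarith
  have hlamcancel : |((lam (k + 1) : ℤ) : ℝ)| * (1 / 3 : ℝ) ^ r ≤ 1 := by
    calc |((lam (k + 1) : ℤ) : ℝ)| * (1 / 3 : ℝ) ^ r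
        ≤ Real.exp r * (1 / 3 : ℝ) ^ r := by
          apply mul_le_mul_of_nonneg_right hlamr (by positivity)
      _ = (Real.exp 1 * (1 / 3)) ^ r := by
          rw [mul_pow, ← Real.exp_nat_mul]
          ring_nf
      _ ≤ 1 ^ r := by
          apply pow_le_pow_left₀ (by positivity)
          linarith
      _ = 1 := one_pow r
  have hlog := logTerm_norm_le m (z / ((k : ℂ) + 1)) (hw3.trans (by norm_num))
  have hwpow : ‖z / ((k : ℂ) + 1)‖ ^ (m + 1) ≤ (1 / 3 : ℝ) ^ (m + 1) :=
    pow_le_pow_left₀ (norm_nonneg _) hw3 _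
  calc ‖gTerm lam k z‖
      = |((lam (k + 1) : ℤ) : ℝ)| * ‖logTerm m (z / ((k : ℂ) + 1))‖ := by
        rw [gTerm, norm_mul, Complex.norm_intCast]
    _ ≤ |((lam (k + 1) : ℤ) : ℝ)| * (2 * (1 / 3 : ℝ) ^ (m + 1)) := by
        apply mul_le_mul_of_nonneg_left (hlog.trans (by linarith)) (abs_nonneg _)
    _ = (|((lam (k + 1) : ℤ) : ℝ)| * (1 / 3 : ℝ) ^ r) * (2 * (1 / 3 : ℝ) ^ (k + 2)) := by
        rw [hmr]
        ring
    _ ≤ 1 * (2 * (1 / 3 : ℝ) ^ (k + 2)) := by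
        apply mul_le_mul_of_nonneg_right hlamcancel (by positivity)
    _ ≤ (1 / 2 : ℝ) ^ (k + 1) := by
        rw [one_mul, pow_succ ((1:ℝ)/3) (k+1)]
        have h13 : ((1:ℝ) / 3) ^ (k + 1) ≤ (1 / 2 : ℝ) ^ (k + 1) :=
          pow_le_pow_left₀ (by norm_num) (by norm_num) _
        nlinarith [pow_nonneg (by norm_num : (0:ℝ) ≤ 1/3) (k+1)]

lemma hasProd_exp {f : ℕ → ℂ} {a : ℂ} (h : HasSum f a) :
    HasProd (fun i => Complex.exp (f i)) (Complex.exp a) := by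
  have := (Complex.continuous_exp.tendsto a).comp h
  exact this.congr fun s => Complex.exp_sum s f

lemma geom_sum_range_le (n : ℕ) : ∑ k ∈ Finset.range n, (1 / 2 : ℝ) ^ (k + 1) ≤ 1 := by
  have : ∑ k ∈ Finset.range n, (1 / 2 : ℝ) ^ (k + 1) = 1 - (1 / 2 : ℝ) ^ n := by
    induction n with
    | zero => simp
    | succ n ih => rw [Finset.sum_range_succ, ih]; ring
  rw [this]
  have : (0:ℝ) ≤ (1 / 2 : ℝ) ^ n := by positivity
  linarith

/-- Key decomposition: the Weierstrass product splits as a finite prefix times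
the exponential of a small tail. -/
lemma key (lam : ℕ → ℤ) (z : ℂ) (hz : ∀ k : ℕ, 1 ≤ k → z ≠ (k : ℂ)) (C : ℝ)
    (hzC : ‖z‖ ≤ C) (n : ℕ) (hn : 3 * (C + 1) ≤ (n : ℝ)) :
    ∃ S : ℂ, ‖S‖ ≤ (1 / 2 : ℝ) ^ n ∧
      weierstrassProduct lam z
        = (∏ k ∈ Finset.range n, wFac lam k z) * Complex.exp S := by
  have hgb : ∀ i : ℕ, ‖gTerm lam (i + n) z‖ ≤ (1 / 2 : ℝ) ^ (i + n + 1) := by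
    intro i
    apply gTerm_norm_le lam C z hzC
    have : (n : ℝ) ≤ ((i + n : ℕ) : ℝ) := by push_cast; linarith [Nat.cast_nonneg (α := ℝ) i]
    linarith
  have hgeo : Summable (fun i : ℕ => (1 / 2 : ℝ) ^ (i + n + 1)) := by
    have : (fun i : ℕ => (1 / 2 : ℝ) ^ (i + n + 1))
        = fun i : ℕ => (1 / 2 : ℝ) ^ i * (1 / 2 : ℝ) ^ (n + 1) := by
      funext i; rw [← pow_add]; ring_nf
    rw [this]
    exact (summable_geometric_of_lt_one (by norm_num) (by norm_num)).mul_right _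
  have hsum : Summable (fun i : ℕ => gTerm lam (i + n) z) :=
    Summable.of_norm_bounded hgeo hgb
  refine ⟨∑' i : ℕ, gTerm lam (i + n) z, ?_, ?_⟩
  · calc ‖∑' i : ℕ, gTerm lam (i + n) z‖
        ≤ ∑' i : ℕ, (1 / 2 : ℝ) ^ (i + n + 1) :=
          (norm_tsum_le_tsum_norm (hgeo.of_nonneg_of_le (fun _ => norm_nonneg _) hgb)).trans
            (Summable.tsum_le_tsum hgb (hgeo.of_nonneg_of_le (fun _ => norm_nonneg _) hgb) hgeo)
      _ = (1 / 2 : ℝ) ^ n := by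
          have h1 : (fun i : ℕ => (1 / 2 : ℝ) ^ (i + n + 1))
              = fun i : ℕ => (1 / 2 : ℝ) ^ i * (1 / 2 : ℝ) ^ (n + 1) := by
            funext i; rw [← pow_add]; ring_nf
          rw [h1, tsum_mul_right, tsum_geometric_of_lt_one (by norm_num) (by norm_num)]
          norm_num
          ring
  · have hexp : ∀ i : ℕ, wFac lam (i + n) z = Complex.exp (gTerm lam (i + n) z) :=
      fun i => wFac_eq_exp lam (i + n) z (one_sub_ne z hz (i + n))
    have hP : HasProd (fun i : ℕ => wFac lam (i + n) z)
        (Complex.exp (∑' i : ℕ, gTerm lam (i + n) z)) := by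
      rw [show (fun i : ℕ => wFac lam (i + n) z)
        = fun i : ℕ => Complex.exp (gTerm lam (i + n) z) from funext hexp]
      exact hasProd_exp hsum.hasSum
    have hmul : Multipliable (fun i : ℕ => wFac lam (i + n) z) := ⟨_, hP⟩
    rw [weierstrassProduct_eq,
      ← Multipliable.prod_mul_tprod_nat_mul' (f := fun k => wFac lam k z) (k := n) hmul,
      hP.tprod_eq]

end WPaux


open WPaux

/-- Continuity of the Weierstrass section: given `ν`, a compact `K ⊆ ℂ ∖ ℕ` and
`ε > 0`, there is `k₀` such that `sup_K |f_μ - f_ν| < ε` whenever `μ` agrees with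
`ν` below `k₀`. -/
theorem weierstrassProduct_section_continuity (ν : ℕ → ℤ) (K : Set ℂ)
    (hK : IsCompact K) (hKD : K ⊆ {z : ℂ | ∀ k : ℕ, 1 ≤ k → z ≠ (k : ℂ)})
    (ε : ℝ) (hε : 0 < ε) :
    ∃ k₀ : ℕ, ∀ μ : ℕ → ℤ, (∀ k < k₀, μ k = ν k) →
      ∀ z ∈ K, ‖weierstrassProduct μ z - weierstrassProduct ν z‖ < ε := by
  classical
  obtain ⟨C₀, hC₀⟩ := hK.exists_bound_of_continuousOn continuousOn_id
  set C : ℝ := max C₀ 0 with hCdef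
  have hC : ∀ z ∈ K, ‖z‖ ≤ C := fun z hz => (hC₀ z hz).trans (le_max_left _ _)
  have hC0 : (0 : ℝ) ≤ C := le_max_right _ _
  set N : ℕ := ⌈3 * (C + 1)⌉₊ with hNdef
  have hN : 3 * (C + 1) ≤ (N : ℝ) := Nat.le_ceil _
  -- continuity of the factors
  have hfc : ∀ k : ℕ, ContinuousOn (fun z => wFac ν k z) K := by
    intro k
    have hbase : Continuous (fun z : ℂ =>
        weierstrassFactor (mExp ν (k + 1)) (z / (k + 1))) := by
      unfold weierstrassFactor
      fun_prop
    apply ContinuousOn.zpow₀ hbase.continuousOn _ ?_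
    intro z hzK
    left
    exact mul_ne_zero (one_sub_ne z (hKD hzK) k) (Complex.exp_ne_zero _)
  have hPc : ContinuousOn (fun z => ∏ k ∈ Finset.range N, wFac ν k z) K :=
    continuousOn_finset_prod _ fun k _ => hfc k
  obtain ⟨A₀, hA₀⟩ := hK.exists_bound_of_continuousOn hPc
  set A : ℝ := |A₀| + 1 with hAdef
  have hApos : (0 : ℝ) < A := by positivity
  have hA : ∀ z ∈ K, ‖∏ k ∈ Finset.range N, wFac ν k z‖ ≤ A := fun z hz =>
    (hA₀ z hz).trans (by rw [hAdef]; nlinarith [abs_nonneg A₀, le_abs_self A₀])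
  set B : ℝ := A * Real.exp 1 with hBdef
  have hBpos : (0 : ℝ) < B := by positivity
  obtain ⟨n₀, hn₀⟩ := exists_pow_lt_of_lt_one (x := ε / (4 * B)) (y := (1 / 2 : ℝ))
    (by positivity) (by norm_num)
  set n : ℕ := max n₀ N with hndef
  have hNn : N ≤ n := le_max_right _ _
  have hn3 : 3 * (C + 1) ≤ (n : ℝ) := hN.trans (Nat.cast_le.2 hNn)
  have hpowlt : (1 / 2 : ℝ) ^ n < ε / (4 * B) :=
    lt_of_le_of_lt (pow_le_pow_of_le_one (by norm_num) (by norm_num) (le_max_left _ _)) hn₀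
  refine ⟨n + 1, fun μ hμ z hzK => ?_⟩
  have hzmem : ∀ k : ℕ, 1 ≤ k → z ≠ (k : ℂ) := hKD hzK
  have hzC := hC z hzK
  obtain ⟨Sμ, hSμ, hfμ⟩ := WPaux.key μ z hzmem C hzC n hn3
  obtain ⟨Sν, hSν, hfν⟩ := WPaux.key ν z hzmem C hzC n hn3
  have hpre : ∏ k ∈ Finset.range n, wFac μ k z = ∏ k ∈ Finset.range n, wFac ν k z := by
    refine Finset.prod_congr rfl fun k hk => ?_
    have hk' : μ (k + 1) = ν (k + 1) := hμ (k + 1) (by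
      rw [Finset.mem_range] at hk; omega)
    unfold WPaux.wFac mExp
    rw [hk']
  -- bound on the prefix of length n
  have hIco : ∏ k ∈ Finset.Ico N n, wFac ν k z
      = Complex.exp (∑ k ∈ Finset.Ico N n, gTerm ν k z) := by
    rw [Complex.exp_sum]
    exact Finset.prod_congr rfl fun k hk => wFac_eq_exp ν k z (one_sub_ne z hzmem k)
  have hT : ‖∑ k ∈ Finset.Ico N n, gTerm ν k z‖ ≤ 1 := by
    calc ‖∑ k ∈ Finset.Ico N n, gTerm ν k z‖
        ≤ ∑ k ∈ Finset.Ico N n, ‖gTerm ν k z‖ := norm_sum_le _ _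
      _ ≤ ∑ k ∈ Finset.Ico N n, (1 / 2 : ℝ) ^ (k + 1) := by
          refine Finset.sum_le_sum fun k hk => ?_
          refine gTerm_norm_le ν C z hzC k ?_
          rw [Finset.mem_Ico] at hk
          have : (N : ℝ) ≤ (k : ℝ) := Nat.cast_le.2 hk.1
          linarith [Nat.cast_nonneg (α := ℝ) k]
      _ ≤ ∑ k ∈ Finset.range n, (1 / 2 : ℝ) ^ (k + 1) := by
          refine Finset.sum_le_sum_of_subset_of_nonneg ?_ fun _ _ _ => by positivity
          rw [Finset.range_eq_Ico]
          exact Finset.Ico_subset_Ico (by omega) le_rfl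
      _ ≤ 1 := geom_sum_range_le n
  have hPbound : ‖∏ k ∈ Finset.range n, wFac ν k z‖ ≤ B := by
    rw [← Finset.prod_range_mul_prod_Ico _ hNn, norm_mul, hIco]
    have h1 : ‖Complex.exp (∑ k ∈ Finset.Ico N n, gTerm ν k z)‖ ≤ Real.exp 1 := by
      rw [Complex.norm_exp]
      exact Real.exp_le_exp.2 ((Complex.re_le_norm _).trans hT)
    rw [hBdef]
    exact mul_le_mul (hA z hzK) h1 (norm_nonneg _) hApos.le
  have h2n1 : ((1 : ℝ) / 2) ^ n ≤ 1 := pow_le_one₀ (by norm_num) (by norm_num)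
  have he1 : ‖Complex.exp Sμ - Complex.exp Sν‖ ≤ 4 * (1 / 2 : ℝ) ^ n := by
    have hμ1 : ‖Complex.exp Sμ - 1‖ ≤ 2 * ‖Sμ‖ :=
      Complex.norm_exp_sub_one_le (by exact hSμ.trans h2n1)
    have hν1 : ‖Complex.exp Sν - 1‖ ≤ 2 * ‖Sν‖ :=
      Complex.norm_exp_sub_one_le (by exact hSν.trans h2n1)
    calc ‖Complex.exp Sμ - Complex.exp Sν‖
        ≤ ‖Complex.exp Sμ - 1‖ + ‖Complex.exp Sν - 1‖ := by
          have := norm_sub_le (Complex.exp Sμ - 1) (Complex.exp Sν - 1)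
          simpa using this
      _ ≤ 2 * ‖Sμ‖ + 2 * ‖Sν‖ := add_le_add hμ1 hν1
      _ ≤ 4 * (1 / 2 : ℝ) ^ n := by linarith
  calc ‖weierstrassProduct μ z - weierstrassProduct ν z‖
      = ‖∏ k ∈ Finset.range n, wFac ν k z‖ * ‖Complex.exp Sμ - Complex.exp Sν‖ := by
        rw [hfμ, hfν, hpre, ← mul_sub, norm_mul]
    _ ≤ B * (4 * (1 / 2 : ℝ) ^ n) :=
        mul_le_mul hPbound he1 (norm_nonneg _) hBpos.le
    _ < ε := by
        have := (mul_lt_mul_iff_right₀ (show (0:ℝ) < 4 * B by positivity)).2 hpowlt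
        rw [mul_div_cancel₀ _ (by positivity : (4 * B : ℝ) ≠ 0)] at this
        linarith
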